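/- Fix D ≥ 1. Then every point of ℝ^D having some coordinate of absolute value exactly 1/2 is covered by the cubes Q_z^δ: {a ∈ ℝ^D : |a_k| = 1/2 for some coordinate k} ⊆ ⋃_{0<δ<1/4} ⋃_{z ∈ A₀} Q_z^δ. -/
import Mathlib


/-- `r` is a half-integer: `r = n/2` with `n` an odd integer. -/
def IsHalfInt (r : ℝ) : Prop := ∃ n : ℤ, Odd n ∧ r = (n : ℝ) / 2

/-- `A₀`: points of `ℝ^D` all of whose coordinates are of the form `n/2` with `n ∈ ℤ`,
at least one coordinate being equal to `1/2` or `-1/2`. -/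
def A0set (D : ℕ) : Set (Fin D → ℝ) :=
  {z | (∀ k, ∃ n : ℤ, z k = (n : ℝ) / 2) ∧ ∃ k, z k = 1 / 2 ∨ z k = -(1 / 2)}

/-- The open box `Q_z^δ`: coordinates with `z_k ∈ ℤ` are within `1/2 - δ` of `z_k`,
coordinates with `z_k` a half-integer are within `δ/2` of `z_k`. -/
def Qcube (D : ℕ) (δ : ℝ) (z : Fin D → ℝ) : Set (Fin D → ℝ) :=
  {a | ∀ k, ((∃ m : ℤ, z k = (m : ℝ)) → |a k - z k| < 1 / 2 - δ) ∧
            (IsHalfInt (z k) → |a k - z k| < δ / 2)}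

lemma half_not_close (x : ℝ) (n : ℤ) (hn : Odd n) (hx : x = (n : ℝ) / 2) :
    ¬ |x - round x| < 1 / 2 := by
  intro h
  have h0 : x - (round x : ℝ) = ((n : ℝ) - 2 * round x) / 2 := by rw [hx]; ring
  have h1 : |x - (round x : ℝ)| = |(n : ℝ) - 2 * round x| / 2 := by
    rw [h0, abs_div]; norm_num
  have h2 : |(n : ℝ) - 2 * round x| < 1 := by
    rw [h1] at h; linarith
  have h3 : |(n : ℤ) - 2 * round x| < 1 := by
    have : ((|(n : ℤ) - 2 * round x| : ℤ) : ℝ) < 1 := by push_cast; exact h2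
    exact_mod_cast this
  rw [abs_lt] at h3
  have h4 : n - 2 * round x = 0 := by omega
  have : n = 2 * round x := by omega
  exact (Int.not_odd_iff_even.mpr ⟨round x, by omega⟩) hn

/-- Covering property (6.1): every point of `ℝ^D` having some coordinate of absolute
value exactly `1/2` lies in some cube `Q_z^δ` with `0 < δ < 1/4` and `z ∈ A₀`. -/
theorem half_level_set_covered (D : ℕ) (hD : 1 ≤ D) :
    {a : Fin D → ℝ | ∃ k, |a k| = 1 / 2} ⊆
      ⋃ δ ∈ Set.Ioo (0 : ℝ) (1 / 4), ⋃ z ∈ A0set D, Qcube D δ z := by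
  intro a ha
  obtain ⟨k₀, hk₀⟩ := ha
  -- z : round each coordinate, except coordinates at exact half-integers stay put.
  set z : Fin D → ℝ := fun k => if |a k - round (a k)| < 1/2 then (round (a k) : ℝ) else a k
    with hzdef
  have hbnd : ∀ k, |a k - round (a k)| ≤ 1/2 := fun k => by
    simpa using abs_sub_round (a k)
  -- half-integer description when not close to an integer
  have hhalf : ∀ k, ¬ |a k - round (a k)| < 1/2 →
      ∃ n : ℤ, Odd n ∧ a k = (n : ℝ) / 2 := by
    intro k hk
    have heq : |a k - round (a k)| = 1/2 := le_antisymm (hbnd k) (not_lt.mp hk)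
    rcases abs_eq (by norm_num : (0:ℝ) ≤ 1/2) |>.mp heq with h | h
    · exact ⟨2 * round (a k) + 1, ⟨round (a k), by ring⟩, by push_cast; linarith⟩
    · exact ⟨2 * round (a k) - 1, ⟨round (a k) - 1, by ring⟩, by push_cast; linarith⟩
  have hne : (Finset.univ : Finset (Fin D)).Nonempty := ⟨k₀, Finset.mem_univ _⟩
  set δ : ℝ := min (1/8) (Finset.univ.inf' hne fun k =>
      if |a k - round (a k)| < 1/2 then (1/2 - |a k - round (a k)|)/2 else 1/8) with hδdef
  have hδpos : 0 < δ := by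
    apply lt_min (by norm_num)
    rw [Finset.lt_inf'_iff]
    intro k _
    split_ifs with h
    · linarith
    · norm_num
  have hδ14 : δ < 1/4 := lt_of_le_of_lt (min_le_left _ _) (by norm_num)
  have hδle : ∀ k, |a k - round (a k)| < 1/2 → δ ≤ (1/2 - |a k - round (a k)|)/2 := by
    intro k hk
    refine le_trans (min_le_right _ _) ?_
    have := Finset.inf'_le
      (f := fun k => if |a k - round (a k)| < 1/2 then (1/2 - |a k - round (a k)|)/2 else 1/8)
      (Finset.mem_univ k)
    rw [if_pos hk] at this
    refine le_trans (le_trans ?_ this) (le_of_eq rfl)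
    exact le_of_eq (Finset.inf'_congr hne rfl (fun _ _ => rfl)) 
  have hmem : a ∈ Qcube D δ z := by
    intro k
    constructor
    · rintro ⟨m, hm⟩
      by_cases hk : |a k - round (a k)| < 1/2
      · have hz : z k = (round (a k) : ℝ) := if_pos hk
        rw [hz]
        have := hδle k hk
        linarith
      · exfalso
        have hz : z k = a k := if_neg hk
        obtain ⟨n, hn, hak⟩ := hhalf k hk
        have : (n : ℝ) = 2 * m := by rw [hz] at hm; rw [hm] at hak; linarith
        have : n = 2 * m := by exact_mod_cast this
        exact (Int.not_odd_iff_even.mpr ⟨m, by omega⟩) hn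
    · intro hhi
      by_cases hk : |a k - round (a k)| < 1/2
      · exfalso
        have hz : z k = (round (a k) : ℝ) := if_pos hk
        obtain ⟨n, hn, hnr⟩ := hhi
        rw [hz] at hnr
        have : (n : ℝ) = 2 * round (a k) := by linarith
        have : n = 2 * round (a k) := by exact_mod_cast this
        exact (Int.not_odd_iff_even.mpr ⟨round (a k), by omega⟩) hn
      · have hz : z k = a k := if_neg hk
        rw [hz]
        simpa using by positivity
  have hzA0 : z ∈ A0set D := by
    constructor
    · intro k
      by_cases hk : |a k - round (a k)| < 1/2
      · refine ⟨2 * round (a k), ?_⟩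
        have hz : z k = (round (a k) : ℝ) := if_pos hk
        rw [hz]; push_cast; ring
      · obtain ⟨n, _, hak⟩ := hhalf k hk
        have hz : z k = a k := if_neg hk
        exact ⟨n, by rw [hz, hak]⟩
    · refine ⟨k₀, ?_⟩
      rcases abs_eq (by norm_num : (0:ℝ) ≤ 1/2) |>.mp hk₀ with h | h
      · have hnk : ¬ |a k₀ - round (a k₀)| < 1/2 :=
          half_not_close _ 1 ⟨0, by ring⟩ (by rw [h]; norm_num)
        have hz : z k₀ = a k₀ := if_neg hnk
        left; rw [hz, h]
      · have hnk : ¬ |a k₀ - round (a k₀)| < 1/2 :=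
          half_not_close _ (-1) ⟨-1, by ring⟩ (by rw [h]; norm_num)
        have hz : z k₀ = a k₀ := if_neg hnk
        right; rw [hz, h]
  simp only [Set.mem_iUnion]
  exact ⟨δ, ⟨hδpos, hδ14⟩, z, hzA0, hmem⟩
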